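/- Let u(n) denote the largest size of a mutually uncorrelated set of words of length n over a 4-letter alphabet. Then u(2n) ≥ u(n)²/4 whenever u(n) is even (more generally, u(2n) ≥ ⌊u(n)/2⌋·⌈u(n)/2⌉). -/

import Mathlib

/-- A word `X` is self-uncorrelated if no proper nonempty prefix of `X`
is also a suffix of `X`. -/
def selfUncorr {α : Type*} (X : List α) : Prop :=
  ∀ k : ℕ, 0 < k → k < X.length → X.take k ≠ X.drop (X.length - k)

/-- A set of words is mutually uncorrelated if each word is self-uncorrelated and
for any two distinct words, no nonempty prefix of one equals a suffix of the other. -/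
def mutUncorr {α : Type*} (S : Set (List α)) : Prop :=
  (∀ X ∈ S, selfUncorr X) ∧
  ∀ X ∈ S, ∀ Y ∈ S, X ≠ Y →
    ∀ k : ℕ, 0 < k → k ≤ X.length → k ≤ Y.length →
      X.take k ≠ Y.drop (Y.length - k)

lemma basic_uncorr {n : ℕ} {S : Finset (List (Fin 4))} (hlen : ∀ X ∈ S, X.length = n)
    (h : mutUncorr (↑S : Set (List (Fin 4)))) {X Y : List (Fin 4)}
    (hX : X ∈ S) (hY : Y ∈ S) {k : ℕ} (hk0 : 0 < k) (hk : k ≤ n)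
    (hne : X ≠ Y ∨ k < n) : X.take k ≠ Y.drop (n - k) := by
  rcases eq_or_ne X Y with rfl | hxy
  · have hkn : k < n := hne.resolve_left (by simp)
    have := h.1 X (Finset.mem_coe.mpr hX) k hk0 (by rw [hlen X hX]; exact hkn)
    rwa [hlen X hX] at this
  · have := h.2 X (Finset.mem_coe.mpr hX) Y (Finset.mem_coe.mpr hY) hxy k hk0
      (by rw [hlen X hX]; omega) (by rw [hlen Y hY]; omega)
    rwa [hlen Y hY] at this

lemma key_uncorr {n : ℕ} {S : Finset (List (Fin 4))} (hlen : ∀ X ∈ S, X.length = n)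
    (h : mutUncorr (↑S : Set (List (Fin 4)))) {a b c d : List (Fin 4)}
    (ha : a ∈ S) (hb : b ∈ S) (hc : c ∈ S) (hd : d ∈ S) (had : a ≠ d)
    {k : ℕ} (hk0 : 0 < k) (hk : k < 2 * n) :
    (a ++ b).take k ≠ (c ++ d).drop (2 * n - k) := by
  have hla : a.length = n := hlen a ha
  have hlb : b.length = n := hlen b hb
  have hlc : c.length = n := hlen c hc
  have hld : d.length = n := hlen d hd
  rcases le_or_gt k n with hkn | hkn
  · -- prefix lies in `a`, suffix lies in `d`
    have h1 : (a ++ b).take k = a.take k := List.take_append_of_le_length (by omega)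
    have h2 : (c ++ d).drop (2 * n - k) = d.drop (n - k) := by
      have : 2 * n - k = c.length + (n - k) := by omega
      rw [this, List.drop_append]; simp
    rw [h1, h2]
    exact basic_uncorr hlen h ha hd hk0 hkn (Or.inl had)
  · -- k = n + j with 0 < j < n
    set j := k - n with hj
    have hj0 : 0 < j := by omega
    have hjn : j < n := by omega
    have h1 : (a ++ b).take k = a ++ b.take j := by
      have : k = a.length + j := by omega
      rw [this, List.take_append]; simp
    have h2 : (c ++ d).drop (2 * n - k) = c.drop (n - j) ++ d := by
      have : 2 * n - k = n - j := by omega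
      rw [this, List.drop_append_of_le_length (by omega)]
    rw [h1, h2]
    intro heq
    have heq' : (a ++ b.take j).take j = (c.drop (n - j) ++ d).take j := by rw [heq]
    have h3 : (a ++ b.take j).take j = a.take j :=
      List.take_append_of_le_length (by omega)
    have h4 : (c.drop (n - j) ++ d).take j = c.drop (n - j) :=
      List.take_left' (by rw [List.length_drop]; omega)
    rw [h3, h4] at heq'
    exact basic_uncorr hlen h ha hc hj0 (le_of_lt hjn) (Or.inr hjn) heq'

/-- From any mutually uncorrelated set `S` of words of length `n` over a 4-letter
alphabet one obtains a mutually uncorrelated set of words of length `2n` of size at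
least `⌊|S|/2⌋·⌈|S|/2⌉`; in particular `u(2n) ≥ u(n)²/4` when `u(n)` is even. -/
theorem stmt4 (n : ℕ) (S : Finset (List (Fin 4))) (hlen : ∀ X ∈ S, X.length = n)
    (h : mutUncorr (↑S : Set (List (Fin 4)))) :
    ∃ T : Finset (List (Fin 4)), (∀ Z ∈ T, Z.length = 2 * n) ∧
      mutUncorr (↑T : Set (List (Fin 4))) ∧
      S.card / 2 * ((S.card + 1) / 2) ≤ T.card := by
  by_cases hS : S.card ≤ 1
  · refine ⟨∅, by simp, ⟨by simp, by simp⟩, ?_⟩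
    have : S.card / 2 = 0 := by omega
    simp [this]
  push_neg at hS
  -- n ≥ 1
  have hn : 1 ≤ n := by
    by_contra hn
    have hn0 : n = 0 := by omega
    obtain ⟨X, hX, Y, hY, hXY⟩ := Finset.one_lt_card.mp hS
    have : X = [] := List.length_eq_zero_iff.mp (by rw [hlen X hX, hn0])
    have : Y = [] := List.length_eq_zero_iff.mp (by rw [hlen Y hY, hn0])
    exact hXY (by simp_all)
  obtain ⟨A, hAsub, hAcard⟩ := Finset.exists_subset_card_eq (s := S) (n := S.card / 2) (Nat.div_le_self _ _)
  set B : Finset (List (Fin 4)) := S \ A with hB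
  have hBsub : B ⊆ S := Finset.sdiff_subset
  have hBcard : B.card = (S.card + 1) / 2 := by
    rw [hB, Finset.card_sdiff_of_subset hAsub, hAcard]; omega
  have hdisj : ∀ x ∈ A, x ∉ B := by intro x hx; simp [hB, hx]
  refine ⟨(A ×ˢ B).image (fun p => p.1 ++ p.2), ?_, ?_, ?_⟩
  · intro Z hZ
    simp only [Finset.mem_image, Finset.mem_product] at hZ
    obtain ⟨⟨a, b⟩, ⟨haA, hbB⟩, rfl⟩ := hZ
    simp only [List.length_append, hlen a (hAsub haA), hlen b (hBsub hbB)]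
    omega
  · constructor
    · -- self uncorrelated
      intro Z hZ
      simp only [Finset.coe_image, Set.mem_image, Finset.mem_coe, Finset.mem_product] at hZ
      obtain ⟨⟨a, b⟩, ⟨haA, hbB⟩, rfl⟩ := hZ
      intro k hk0 hk
      have hZlen : (a ++ b).length = 2 * n := by
        simp only [List.length_append, hlen a (hAsub haA), hlen b (hBsub hbB)]; omega
      rw [hZlen] at hk ⊢
      have hab : a ≠ b := by rintro rfl; exact hdisj a haA hbB
      exact key_uncorr hlen h (hAsub haA) (hBsub hbB) (hAsub haA) (hBsub hbB) hab hk0 hk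
    · -- mutually uncorrelated
      intro Z hZ W hW hZW k hk0 hkZ hkW
      simp only [Finset.coe_image, Set.mem_image, Finset.mem_coe, Finset.mem_product] at hZ hW
      obtain ⟨⟨a, b⟩, ⟨haA, hbB⟩, rfl⟩ := hZ
      obtain ⟨⟨c, d⟩, ⟨hcA, hdB⟩, rfl⟩ := hW
      have hZlen : (a ++ b).length = 2 * n := by
        simp only [List.length_append, hlen a (hAsub haA), hlen b (hBsub hbB)]; omega
      have hWlen : (c ++ d).length = 2 * n := by
        simp only [List.length_append, hlen c (hAsub hcA), hlen d (hBsub hdB)]; omega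
      rw [hZlen] at hkZ
      rw [hWlen] at hkW ⊢
      have had : a ≠ d := by rintro rfl; exact hdisj a haA hdB
      rcases lt_or_eq_of_le hkW with hklt | hkeq
      · exact key_uncorr hlen h (hAsub haA) (hBsub hbB) (hAsub hcA) (hBsub hdB) had hk0 hklt
      · subst hkeq
        rw [Nat.sub_self, List.drop_zero, ← hZlen, List.take_length]
        exact hZW
  · -- cardinality
    have hinj : Set.InjOn (fun p : List (Fin 4) × List (Fin 4) => p.1 ++ p.2)
        ↑(A ×ˢ B) := by
      rintro ⟨a, b⟩ hab ⟨c, d⟩ hcd heq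
      simp only [Finset.coe_product, Set.mem_prod, Finset.mem_coe] at hab hcd
      simp only at heq
      have hlac : a.length = c.length := by
        rw [hlen a (hAsub hab.1), hlen c (hAsub hcd.1)]
      have hac : a = c := by
        have := congrArg (List.take a.length) heq
        rwa [List.take_left, hlac, List.take_left] at this
      subst hac
      have : b = d := List.append_cancel_left heq
      subst this
      rfl
    rw [Finset.card_image_of_injOn hinj, Finset.card_product, hAcard, hBcard]
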